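/- arXiv:2311.01910 — 7 statements merged into one kernel-verified Lean document; each statement's English description precedes it below -/
import Mathlib

section
/- No boundary equilibrium (Lemma on boundary equilibria, part I): if m > r·(b+k)²/(4k), then there is no x > 0 with r·(1 − x/k) − m/(x+b) = 0; equivalently, system (A1) has no equilibrium of the form (x, 0) with x > 0. -/
/-- No boundary equilibrium: if `m > r·(b+k)²/(4k)` then there is no `x > 0` with
`r·(1 - x/k) - m/(x+b) = 0`. -/
theorem no_boundary_equilibrium
    (r s k q a n m b c : ℝ)
    (hr : 0 < r) (hs : 0 < s) (hk : 0 < k) (hq : 0 < q) (ha : 0 < a)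
    (hn : 0 < n) (hm : 0 < m) (hb : 0 < b) (hc : -2 * Real.sqrt a < c)
    (hbig : m > r * (b + k) ^ 2 / (4 * k)) :
    ∀ x > (0 : ℝ), r * (1 - x / k) - m / (x + b) ≠ 0 := by
  intro x hx h
  have hxb : 0 < x + b := by linarith
  rw [gt_iff_lt, div_lt_iff₀ (by linarith : (0:ℝ) < 4 * k)] at hbig
  have hk' : k ≠ 0 := hk.ne'
  have hxb' : (x + b) ≠ 0 := hxb.ne'
  field_simp at h
  nlinarith [sq_nonneg (k - b - 2 * x), mul_pos hr hx, mul_pos hm hx]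
end

section
/- Unique boundary equilibrium (Lemma on boundary equilibria, part II(iii)): if m < r·(b+k)²/(4k) and m < b·r, then x = ((k − b) + √((r·(b+k)² − 4·k·m)/r))/2 is the unique x > 0 satisfying r·(1 − x/k) − m/(x+b) = 0. -/
/-- Unique boundary equilibrium: if `m < r·(b+k)²/(4k)` and `m < b·r`, then
`x = ((k - b) + √((r·(b+k)² - 4·k·m)/r))/2` is the unique positive root of
`r·(1 - x/k) - m/(x+b)`. -/
theorem unique_boundary_equilibrium
    (r s k q a n m b c : ℝ)
    (hr : 0 < r) (hs : 0 < s) (hk : 0 < k) (hq : 0 < q) (ha : 0 < a)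
    (hn : 0 < n) (hm : 0 < m) (hb : 0 < b) (hc : -2 * Real.sqrt a < c)
    (hlt : m < r * (b + k) ^ 2 / (4 * k)) (hbr : m < b * r) :
    ∀ x > (0 : ℝ),
      (r * (1 - x / k) - m / (x + b) = 0 ↔
        x = ((k - b) + Real.sqrt ((r * (b + k) ^ 2 - 4 * k * m) / r)) / 2) := by
  intro x hx
  set S := Real.sqrt ((r * (b + k) ^ 2 - 4 * k * m) / r) with hSdef
  have hD : 0 < (r * (b + k) ^ 2 - 4 * k * m) / r := by
    apply div_pos _ hr
    have h4 := (lt_div_iff₀ (by positivity : (0:ℝ) < 4 * k)).mp hlt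
    nlinarith [h4]
  have hS2 : S ^ 2 = (r * (b + k) ^ 2 - 4 * k * m) / r := Real.sq_sqrt hD.le
  have hSpos : 0 < S := Real.sqrt_pos.mpr hD
  have hS2' : r * S ^ 2 = r * (b + k) ^ 2 - 4 * k * m := by
    rw [hS2]; field_simp
  have hkey : (k - b) ^ 2 < S ^ 2 := by nlinarith [mul_pos hk (sub_pos.mpr hbr)]
  have hSgt : b - k < S := by nlinarith
  have hSgt' : k - b < S := by nlinarith
  have hk0 : k ≠ 0 := hk.ne'
  constructor
  · intro h
    have hxb : 0 < x + b := by linarith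
    have hq : r * (k - x) * (x + b) = m * k := by
      field_simp at h
      linarith [h]
    have hfac : r * ((2 * x - (k - b) - S) * (2 * x - (k - b) + S)) = 0 := by
      linear_combination -4 * hq - hS2'
    rcases mul_eq_zero.mp hfac with h0 | hfac
    · exact absurd h0 hr.ne'
    rcases mul_eq_zero.mp hfac with h1 | h1
    · linarith
    · linarith
  · intro h
    subst h
    have hxb : 0 < ((k - b) + S) / 2 + b := by linarith
    rw [sub_eq_zero, eq_div_iff hxb.ne']
    field_simp
    linear_combination -hS2'
end

section
/- Linearized classification of the two boundary equilibria: assume b·r < m < r·(b+k)²/(4k) and k > b, and let x₁ = ((k − b) − √((r·(b+k)² − 4·k·m)/r))/2 and x₂ = ((k − b) + √((r·(b+k)² − 4·k·m)/r))/2 be the two positive roots of φ(x) := r·(1 − x/k) − m/(x+b). Then φ′(x₁) > 0 and φ′(x₂) < 0; consequently the Jacobian matrix of (f, g) at (x₁, 0) has the two positive eigenvalues x₁·φ′(x₁) and s (B₁ is an unstable node), while the Jacobian at (x₂, 0) has eigenvalues x₂·φ′(x₂) < 0 and s > 0 of opposite signs (B₂ is a saddle). -/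
private lemma specTri (p w t : ℝ) :
    p ∈ spectrum ℝ (!![p, w; 0, t] : Matrix (Fin 2) (Fin 2) ℝ) ∧
    t ∈ spectrum ℝ (!![p, w; 0, t] : Matrix (Fin 2) (Fin 2) ℝ) := by
  constructor <;>
  · rw [spectrum.mem_iff]
    intro h
    rw [Matrix.isUnit_iff_isUnit_det, isUnit_iff_ne_zero] at h
    apply h
    simp [Matrix.det_fin_two, Matrix.algebraMap_eq_diagonal]

private lemma hasDerivAt_phi (r k m b x : ℝ) (hk : k ≠ 0) (hxb : x + b ≠ 0) :
    HasDerivAt (fun x : ℝ => r * (1 - x / k) - m / (x + b))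
      (-(r / k) + m / (x + b) ^ 2) x := by
  have h1 : HasDerivAt (fun x : ℝ => r * (1 - x / k)) (r * -(1 / k)) x :=
    (((hasDerivAt_id x).div_const k).const_sub 1).const_mul r
  have h2 : HasDerivAt (fun x : ℝ => m / (x + b))
      ((0 * (x + b) - m * 1) / (x + b) ^ 2) x :=
    (hasDerivAt_const x m).div ((hasDerivAt_id x).add_const b) hxb
  have := h1.sub h2
  exact this.congr_deriv (by ring)

private lemma sign_lemma1 (r k m b d : ℝ) (hr : 0 < r) (hdpos : 0 < d)
    (hdlt : d < k - b) (hb : 0 < b)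
    (rd2 : r * d ^ 2 = r * (b + k) ^ 2 - 4 * k * m) :
    r * ((k - b - d) / 2 + b) ^ 2 < k * m := by
  nlinarith [mul_pos (mul_pos hr hdpos) (show (0:ℝ) < k + b - d by linarith)]

private lemma sign_lemma2 (r k m b d : ℝ) (hr : 0 < r) (hdpos : 0 < d)
    (hdlt : d < k - b) (hb : 0 < b)
    (rd2 : r * d ^ 2 = r * (b + k) ^ 2 - 4 * k * m) :
    k * m < r * ((k - b + d) / 2 + b) ^ 2 := by
  nlinarith [mul_pos (mul_pos hr hdpos) (show (0:ℝ) < k + b by linarith)]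

/-- Linearized classification of the two boundary equilibria: with
`b·r < m < r·(b+k)²/(4k)` and `k > b`, and `x₁ < x₂` the two positive roots of
`φ(x) = r·(1 - x/k) - m/(x+b)`, one has `φ′(x₁) > 0` and `φ′(x₂) < 0`; the Jacobian
matrix of `(f, g)` at `(x₁, 0)` has the two positive eigenvalues `x₁·φ′(x₁)` and `s`
(unstable node), while the Jacobian at `(x₂, 0)` has eigenvalues `x₂·φ′(x₂) < 0` and
`s > 0` of opposite signs (saddle). -/
theorem boundary_equilibria_classification
    (r s k q a n m b c : ℝ)
    (hr : 0 < r) (hs : 0 < s) (hk : 0 < k) (hq : 0 < q) (ha : 0 < a)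
    (hn : 0 < n) (hm : 0 < m) (hb : 0 < b) (hc : -2 * Real.sqrt a < c)
    (hbr : b * r < m) (hlt : m < r * (b + k) ^ 2 / (4 * k)) (hkb : b < k)
    (φ : ℝ → ℝ) (hφ : φ = fun x => r * (1 - x / k) - m / (x + b))
    (f g : ℝ → ℝ → ℝ)
    (hf : f = fun x y => x * (r * (1 - x / k) - m / (x + b)) -
        q * x * y / (x ^ 2 + c * x + a))
    (hg : g = fun x y => s * y * (1 - y / (n * x)))
    (x₁ x₂ : ℝ)
    (hx₁ : x₁ = ((k - b) - Real.sqrt ((r * (b + k) ^ 2 - 4 * k * m) / r)) / 2)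
    (hx₂ : x₂ = ((k - b) + Real.sqrt ((r * (b + k) ^ 2 - 4 * k * m) / r)) / 2)
    (J₁ J₂ : Matrix (Fin 2) (Fin 2) ℝ)
    (hJ₁ : J₁ = !![deriv (fun x => f x 0) x₁, deriv (fun y => f x₁ y) 0;
                   deriv (fun x => g x 0) x₁, deriv (fun y => g x₁ y) 0])
    (hJ₂ : J₂ = !![deriv (fun x => f x 0) x₂, deriv (fun y => f x₂ y) 0;
                   deriv (fun x => g x 0) x₂, deriv (fun y => g x₂ y) 0]) :
    0 < deriv φ x₁ ∧ deriv φ x₂ < 0 ∧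
      (x₁ * deriv φ x₁ ∈ spectrum ℝ J₁ ∧ s ∈ spectrum ℝ J₁ ∧
        0 < x₁ * deriv φ x₁ ∧ 0 < s) ∧
      (x₂ * deriv φ x₂ ∈ spectrum ℝ J₂ ∧ s ∈ spectrum ℝ J₂ ∧
        x₂ * deriv φ x₂ < 0 ∧ 0 < s) := by
  set d : ℝ := Real.sqrt ((r * (b + k) ^ 2 - 4 * k * m) / r) with hd
  -- basic facts about d
  have hDpos : 0 < (r * (b + k) ^ 2 - 4 * k * m) / r := by
    have h4 : 4 * k * m < r * (b + k) ^ 2 := by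
      rw [lt_div_iff₀ (by positivity)] at hlt
      linarith
    exact div_pos (by linarith) hr
  have hdpos : 0 < d := Real.sqrt_pos.mpr hDpos
  have hd2 : d ^ 2 = (r * (b + k) ^ 2 - 4 * k * m) / r := Real.sq_sqrt hDpos.le
  have rd2 : r * d ^ 2 = r * (b + k) ^ 2 - 4 * k * m := by
    rw [hd2]; field_simp
  have hdlt : d < k - b := by
    have hsq : d ^ 2 < (k - b) ^ 2 := by nlinarith [rd2]
    nlinarith [hdpos]
  have hx₁pos : 0 < x₁ := by rw [hx₁]; linarith
  have hx₂pos : 0 < x₂ := by rw [hx₂]; linarith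
  have hx₁b : (0:ℝ) < x₁ + b := by linarith
  have hx₂b : (0:ℝ) < x₂ + b := by linarith
  -- roots of φ
  have hkey₁ : r * (k - x₁) * (x₁ + b) = k * m := by
    rw [hx₁]; linear_combination (-1/4 : ℝ) * rd2
  have hkey₂ : r * (k - x₂) * (x₂ + b) = k * m := by
    rw [hx₂]; linear_combination (-1/4 : ℝ) * rd2
  have hroot₁ : r * (1 - x₁ / k) - m / (x₁ + b) = 0 := by
    have heq : r * (1 - x₁ / k) - m / (x₁ + b)
        = (r * (k - x₁) * (x₁ + b) - k * m) / (k * (x₁ + b)) := by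
      field_simp
    rw [heq, hkey₁, sub_self, zero_div]
  have hroot₂ : r * (1 - x₂ / k) - m / (x₂ + b) = 0 := by
    have heq : r * (1 - x₂ / k) - m / (x₂ + b)
        = (r * (k - x₂) * (x₂ + b) - k * m) / (k * (x₂ + b)) := by
      field_simp
    rw [heq, hkey₂, sub_self, zero_div]
  -- derivatives of φ
  have hdφ₁ : deriv φ x₁ = -(r / k) + m / (x₁ + b) ^ 2 := by
    rw [hφ]; exact (hasDerivAt_phi r k m b x₁ hk.ne' hx₁b.ne').deriv
  have hdφ₂ : deriv φ x₂ = -(r / k) + m / (x₂ + b) ^ 2 := by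
    rw [hφ]; exact (hasDerivAt_phi r k m b x₂ hk.ne' hx₂b.ne').deriv
  -- sign of φ'
  have hsign₁ : 0 < deriv φ x₁ := by
    rw [hdφ₁]
    have h : r * (x₁ + b) ^ 2 < k * m := by
      rw [hx₁]; exact sign_lemma1 r k m b d hr hdpos hdlt hb rd2
    have : r / k < m / (x₁ + b) ^ 2 := by
      rw [div_lt_div_iff₀ hk (by positivity)]
      linarith [h]
    linarith
  have hsign₂ : deriv φ x₂ < 0 := by
    rw [hdφ₂]
    have h : k * m < r * (x₂ + b) ^ 2 := by
      rw [hx₂]; exact sign_lemma2 r k m b d hr hdpos hdlt hb rd2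
    have : m / (x₂ + b) ^ 2 < r / k := by
      rw [div_lt_div_iff₀ (by positivity) hk]
      linarith [h]
    linarith
  -- Jacobian entries
  have hfx : ∀ x : ℝ, 0 < x → x + b ≠ 0 → r * (1 - x / k) - m / (x + b) = 0 →
      deriv (fun x' => f x' 0) x = x * deriv φ x := by
    intro x hx hxb hroot
    have hφ' := hasDerivAt_phi r k m b x hk.ne' hxb
    have hfun : (fun x' => f x' 0) = fun x' => x' * (r * (1 - x' / k) - m / (x' + b)) := by
      funext x'
      rw [hf]
      simp
    have hprod : HasDerivAt (fun x' => x' * (r * (1 - x' / k) - m / (x' + b)))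
        (1 * (r * (1 - x / k) - m / (x + b)) + x * (-(r / k) + m / (x + b) ^ 2)) x := by
      exact (hasDerivAt_id x).mul hφ'
    rw [hfun, hprod.deriv, hφ, hφ'.deriv, hroot]
    ring
  have hgx : ∀ x0 : ℝ, deriv (fun x' => g x' 0) x0 = 0 := by
    intro x0
    have : (fun x' => g x' 0) = fun _ => (0:ℝ) := by
      funext x'; rw [hg]; simp
    rw [this, deriv_const]
  have hgy : ∀ x0 : ℝ, deriv (fun y => g x0 y) 0 = s := by
    intro x0
    have h1 : HasDerivAt (fun y : ℝ => s * y) s 0 := by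
      simpa using (hasDerivAt_id (0:ℝ)).const_mul s
    have h2 : HasDerivAt (fun y : ℝ => 1 - y / (n * x0)) (-(1 / (n * x0))) 0 :=
      ((hasDerivAt_id (0:ℝ)).div_const (n * x0)).const_sub 1
    rw [hg]
    have h3 : HasDerivAt (fun y : ℝ => s * y * (1 - y / (n * x0))) _ 0 := h1.mul h2
    simpa using h3.deriv
  rw [hfx x₁ hx₁pos hx₁b.ne' hroot₁, hgx x₁, hgy x₁] at hJ₁
  rw [hfx x₂ hx₂pos hx₂b.ne' hroot₂, hgx x₂, hgy x₂] at hJ₂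
  refine ⟨hsign₁, hsign₂, ⟨?_, ?_, mul_pos hx₁pos hsign₁, hs⟩,
    ⟨?_, ?_, mul_neg_of_pos_of_neg hx₂pos hsign₂, hs⟩⟩
  · rw [hJ₁]; exact (specTri _ _ _).1
  · rw [hJ₁]; exact (specTri _ _ _).2
  · rw [hJ₂]; exact (specTri _ _ _).1
  · rw [hJ₂]; exact (specTri _ _ _).2
end

section
/- Key estimates for positive invariance of Γ₂ = {(x,y) : 0 < x ≤ k, 0 ≤ y ≤ n·k} (Lemma 2.2): (i) for every x > k and every y ≥ 0, f(x,y) < 0; (ii) for every x with 0 < x ≤ k and every y > n·k, g(x,y) < 0; (iii) for every x > 0, g(x, 0) = 0. -/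
/-- Key estimates for positive invariance of `Γ₂ = {(x,y) : 0 < x ≤ k, 0 ≤ y ≤ n·k}`:
(i) `f x y < 0` for `x > k`, `y ≥ 0`; (ii) `g x y < 0` for `0 < x ≤ k`, `y > n·k`;
(iii) `g x 0 = 0` for `x > 0`. -/
theorem invariance_estimates
    (r s k q a n m b c : ℝ)
    (hr : 0 < r) (hs : 0 < s) (hk : 0 < k) (hq : 0 < q) (ha : 0 < a)
    (hn : 0 < n) (hm : 0 < m) (hb : 0 < b) (hc : -2 * Real.sqrt a < c)
    (f g : ℝ → ℝ → ℝ)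
    (hf : f = fun x y => x * (r * (1 - x / k) - m / (x + b)) -
        q * x * y / (x ^ 2 + c * x + a))
    (hg : g = fun x y => s * y * (1 - y / (n * x))) :
    (∀ x > k, ∀ y ≥ (0 : ℝ), f x y < 0) ∧
      (∀ x, 0 < x → x ≤ k → ∀ y > n * k, g x y < 0) ∧
      (∀ x > (0 : ℝ), g x 0 = 0) := by
  have hsa : Real.sqrt a ^ 2 = a := Real.sq_sqrt ha.le
  refine ⟨?_, ?_, ?_⟩
  · intro x hx y hy
    have hx0 : 0 < x := hk.trans hx
    have hQ : 0 < x ^ 2 + c * x + a := by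
      have h1 : (-2 * Real.sqrt a) * x < c * x := by
        exact mul_lt_mul_of_pos_right hc hx0
      nlinarith [sq_nonneg (x - Real.sqrt a)]
    have h2 : 0 ≤ q * x * y / (x ^ 2 + c * x + a) :=
      div_nonneg (by positivity) hQ.le
    have h3 : x * (r * (1 - x / k) - m / (x + b)) < 0 := by
      have hxb : 0 < x + b := by linarith
      have hneg : r * (1 - x / k) - m / (x + b) < 0 := by
        have : 1 - x / k < 0 := by
          rw [sub_neg]
          exact (one_lt_div hk).mpr hx
        have hm' : 0 < m / (x + b) := div_pos hm hxb
        nlinarith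
      exact mul_neg_of_pos_of_neg hx0 hneg
    rw [hf]; dsimp only; linarith
  · intro x hx hxk y hy
    have hnx : 0 < n * x := by positivity
    have hy0 : 0 < y := lt_trans (by positivity) hy
    have : 1 - y / (n * x) < 0 := by
      rw [sub_neg]
      rw [lt_div_iff₀ hnx]
      nlinarith
    rw [hg]; dsimp only
    exact mul_neg_of_pos_of_neg (by positivity) this
  · intro x hx
    rw [hg]; simp
end

section
/- Root counting, case C₁ᵦ of Appendix A: let F̄(x) = a₄x⁴ + a₃x³ + a₂x² + a₁x + a₀ with a₄ > 0. If 9·a₃² − 24·a₂·a₄ < 0 and a₁ < 0, then the derivative F̄′ has exactly one root x̂₁ in (0, ∞). Moreover: if a₀ > 0, then F̄ has exactly two roots in (0, ∞) when F̄(x̂₁) < 0, exactly one root in (0, ∞) when F̄(x̂₁) = 0, and no root in (0, ∞) when F̄(x̂₁) > 0; and if a₀ ≤ 0, then F̄ has exactly one root in (0, ∞). -/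
lemma cubic_pos_large (a b c d m : ℝ) (ha : 0 < a) :
    ∃ x, m < x ∧ 1 ≤ x ∧ 0 < a*x^3 + b*x^2 + c*x + d := by
  set x := max (m+1) (max 1 ((|b|+|c|+|d|+1)/a)) with hx
  have hx1 : 1 ≤ x := le_trans (le_max_left _ _) (le_max_right _ _)
  have hx0 : (0:ℝ) < x := lt_of_lt_of_le one_pos hx1
  have hxx : x ≤ x^2 := by nlinarith
  refine ⟨x, lt_of_lt_of_le (lt_add_one m) (le_max_left _ _), hx1, ?_⟩
  have hxa : |b|+|c|+|d|+1 ≤ a * x := by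
    have := le_trans (le_max_right 1 ((|b|+|c|+|d|+1)/a)) (le_max_right (m+1) _)
    calc |b|+|c|+|d|+1 = a * ((|b|+|c|+|d|+1)/a) := by field_simp
    _ ≤ a * x := by apply mul_le_mul_of_nonneg_left this ha.le
  have h1 : |c| * x ≤ |c| * x^2 := mul_le_mul_of_nonneg_left hxx (abs_nonneg c)
  have h2 : |d| ≤ |d| * x^2 := by
    calc |d| = |d| * 1 := (mul_one _).symm
    _ ≤ |d| * x^2 := mul_le_mul_of_nonneg_left (le_trans hx1 hxx) (abs_nonneg d)
  have h3 : x^2*(|b|+|c|+|d|+1) ≤ x^2*(a*x) :=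
    mul_le_mul_of_nonneg_left hxa (sq_nonneg x)
  have h4 : 0 ≤ (b+|b|)*x^2 := mul_nonneg (by linarith [neg_abs_le b]) (sq_nonneg x)
  have h5 : 0 ≤ (c+|c|)*x := mul_nonneg (by linarith [neg_abs_le c]) hx0.le
  have h6 : 0 ≤ d+|d| := by linarith [neg_abs_le d]
  nlinarith [sq_nonneg x, mul_pos hx0 hx0]

lemma quartic_pos_large (a b c d e m : ℝ) (ha : 0 < a) :
    ∃ x, m < x ∧ 0 < a*x^4 + b*x^3 + c*x^2 + d*x + e := by
  obtain ⟨x, hxm, hx1, hxpos⟩ := cubic_pos_large a b c (d - |e|) m ha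
  refine ⟨x, hxm, ?_⟩
  have hx0 : (0:ℝ) < x := lt_of_lt_of_le one_pos hx1
  have h := mul_pos hx0 hxpos
  nlinarith [neg_abs_le e, mul_le_mul_of_nonneg_left hx1 (abs_nonneg e)]

/-- Root counting, case C₁ᵦ: if `a₄ > 0`, `9a₃² - 24a₂a₄ < 0` and `a₁ < 0`, then `F̄′`
has exactly one positive root `xhat`; if `a₀ > 0` then `F̄` has exactly two positive roots
when `F̄(xhat) < 0`, exactly one when `F̄(xhat) = 0`, and none when `F̄(xhat) > 0`; and if
`a₀ ≤ 0` then `F̄` has exactly one positive root. -/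
theorem quartic_case_C1b
    (a₀ a₁ a₂ a₃ a₄ : ℝ) (ha₄ : 0 < a₄)
    (Fbar : ℝ → ℝ)
    (hFbar : Fbar = fun x => a₄ * x ^ 4 + a₃ * x ^ 3 + a₂ * x ^ 2 + a₁ * x + a₀)
    (hdisc : 9 * a₃ ^ 2 - 24 * a₂ * a₄ < 0) (ha₁ : a₁ < 0) :
    (∃! x, 0 < x ∧ deriv Fbar x = 0) ∧
      (∀ xhat, 0 < xhat → deriv Fbar xhat = 0 →
        ((0 < a₀ →
            (Fbar xhat < 0 →
              ∃ y₁ y₂, 0 < y₁ ∧ y₁ < y₂ ∧ Fbar y₁ = 0 ∧ Fbar y₂ = 0 ∧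
                ∀ x, 0 < x → Fbar x = 0 → (x = y₁ ∨ x = y₂)) ∧
            (Fbar xhat = 0 → ∃! x, 0 < x ∧ Fbar x = 0) ∧
            (0 < Fbar xhat → ∀ x > (0 : ℝ), Fbar x ≠ 0)) ∧
          (a₀ ≤ 0 → ∃! x, 0 < x ∧ Fbar x = 0))) := by
  set G : ℝ → ℝ := fun x => 4*a₄*x^3 + 3*a₃*x^2 + 2*a₂*x + a₁ with hGdef
  have hF' : ∀ x : ℝ, HasDerivAt Fbar (G x) x := by
    intro x
    rw [hFbar]
    have h := (((((hasDerivAt_pow 4 x).const_mul a₄).add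
      ((hasDerivAt_pow 3 x).const_mul a₃)).add
      ((hasDerivAt_pow 2 x).const_mul a₂)).add
      ((hasDerivAt_id x).const_mul a₁)).add_const a₀
    convert h using 1
    · rfl
    · rfl
    · rfl
    simp only [G]
    push_cast
    ring
  have hdF : deriv Fbar = G := funext fun x => (hF' x).deriv
  have hFc : Continuous Fbar := by rw [hFbar]; continuity
  have hG' : ∀ x : ℝ, HasDerivAt G (12*a₄*x^2 + 6*a₃*x + 2*a₂) x := by
    intro x
    rw [hGdef]
    have h := ((((hasDerivAt_pow 3 x).const_mul (4*a₄)).add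
      ((hasDerivAt_pow 2 x).const_mul (3*a₃))).add
      ((hasDerivAt_id x).const_mul (2*a₂))).add_const a₁
    convert h using 1
    · rfl
    · rfl
    · rfl
    push_cast
    ring
  have hGc : Continuous G :=
    continuous_iff_continuousAt.2 fun x => (hG' x).differentiableAt.continuousAt
  have hquad : ∀ x : ℝ, 0 < 12*a₄*x^2 + 6*a₃*x + 2*a₂ := by
    intro x
    nlinarith [sq_nonneg (12*a₄*x + 3*a₃), ha₄, hdisc, mul_pos ha₄ ha₄]
  have hmono : StrictMono G := by
    apply strictMono_of_deriv_pos
    intro x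
    rw [(hG' x).deriv]
    exact hquad x
  have hG0 : G 0 = a₁ := by simp [hGdef]
  obtain ⟨b, hb0, hb1, hbpos⟩ := cubic_pos_large (4*a₄) (3*a₃) (2*a₂) a₁ 0 (by positivity)
  have hGb : 0 < G b := hbpos
  have hIVT : (0:ℝ) ∈ G '' Set.Ioo 0 b := by
    apply intermediate_value_Ioo hb0.le hGc.continuousOn
    rw [hG0]
    exact ⟨ha₁, hGb⟩
  obtain ⟨xh, hxhmem, hGxh⟩ := hIVT
  have hF0 : Fbar 0 = a₀ := by rw [hFbar]; norm_num
  constructor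
  · exact ⟨xh, ⟨hxhmem.1, by rw [hdF]; exact hGxh⟩, fun y hy =>
      hmono.injective (by rw [← hdF, hy.2, ← hGxh, hdF])⟩
  intro xhat hxhat hderiv
  have hGxhat : G xhat = 0 := by rw [← hdF]; exact hderiv
  have hanti : StrictAntiOn Fbar (Set.Icc 0 xhat) := by
    apply strictAntiOn_of_deriv_neg (convex_Icc 0 xhat) hFc.continuousOn
    intro x hx
    rw [interior_Icc] at hx
    rw [hdF]
    have := hmono hx.2
    rw [hGxhat] at this
    exact this
  have hmonoF : StrictMonoOn Fbar (Set.Ici xhat) := by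
    apply strictMonoOn_of_deriv_pos (convex_Ici xhat) hFc.continuousOn
    intro x hx
    rw [interior_Ici] at hx
    rw [hdF]
    have := hmono hx
    rw [hGxhat] at this
    exact this
  have hbig : ∀ m : ℝ, ∃ z, m < z ∧ 0 < Fbar z := by
    intro m
    obtain ⟨z, hz, hzpos⟩ := quartic_pos_large a₄ a₃ a₂ a₁ a₀ m ha₄
    exact ⟨z, hz, by rw [hFbar]; exact hzpos⟩
  -- a root to the right of xhat whenever Fbar xhat < 0
  have hright : Fbar xhat < 0 → ∃ y, xhat < y ∧ Fbar y = 0 := by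
    intro hneg
    obtain ⟨z, hz, hzpos⟩ := hbig xhat
    have : (0:ℝ) ∈ Fbar '' Set.Ioo xhat z :=
      intermediate_value_Ioo hz.le hFc.continuousOn ⟨hneg, hzpos⟩
    obtain ⟨y, hy, hFy⟩ := this
    exact ⟨y, hy.1, hFy⟩
  constructor
  · intro ha₀
    refine ⟨?_, ?_, ?_⟩
    · -- Fbar xhat < 0 : two roots
      intro hneg
      have : (0:ℝ) ∈ Fbar '' Set.Ioo 0 xhat := by
        apply intermediate_value_Ioo' hxhat.le hFc.continuousOn
        rw [hF0]
        exact ⟨hneg, ha₀⟩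
      obtain ⟨y₁, hy₁mem, hFy₁⟩ := this
      obtain ⟨y₂, hy₂gt, hFy₂⟩ := hright hneg
      refine ⟨y₁, y₂, hy₁mem.1, lt_trans hy₁mem.2 hy₂gt, hFy₁, hFy₂, ?_⟩
      intro x hx hFx
      rcases le_or_gt x xhat with hle | hlt
      · left
        exact hanti.injOn ⟨hx.le, hle⟩ ⟨hy₁mem.1.le, hy₁mem.2.le⟩ (by rw [hFx, hFy₁])
      · right
        exact hmonoF.injOn (Set.mem_Ici.2 hlt.le) (Set.mem_Ici.2 hy₂gt.le)
          (by rw [hFx, hFy₂])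
    · -- Fbar xhat = 0 : unique root xhat
      intro heq
      refine ⟨xhat, ⟨hxhat, heq⟩, ?_⟩
      rintro y ⟨hy0, hFy⟩
      rcases lt_trichotomy y xhat with h | h | h
      · have := hanti ⟨hy0.le, h.le⟩ ⟨hxhat.le, le_refl xhat⟩ h
        rw [heq, hFy] at this
        exact absurd this (lt_irrefl 0)
      · exact h
      · have := hmonoF (Set.mem_Ici.2 (le_refl xhat)) (Set.mem_Ici.2 h.le) h
        rw [heq, hFy] at this
        exact absurd this (lt_irrefl 0)
    · -- Fbar xhat > 0 : no roots
      intro hpos x hx hFx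
      rcases lt_trichotomy x xhat with h | h | h
      · have := hanti ⟨hx.le, h.le⟩ ⟨hxhat.le, le_refl xhat⟩ h
        rw [hFx] at this
        linarith
      · rw [h] at hFx
        rw [hFx] at hpos
        exact lt_irrefl 0 hpos
      · have := hmonoF (Set.mem_Ici.2 (le_refl xhat)) (Set.mem_Ici.2 h.le) h
        rw [hFx] at this
        linarith
  · -- a₀ ≤ 0 : unique root
    intro ha₀
    have hneg : Fbar xhat < 0 := by
      have := hanti ⟨le_refl 0, hxhat.le⟩ ⟨hxhat.le, le_refl xhat⟩ hxhat
      rw [hF0] at this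
      linarith
    obtain ⟨y, hygt, hFy⟩ := hright hneg
    refine ⟨y, ⟨lt_trans hxhat hygt, hFy⟩, ?_⟩
    rintro x ⟨hx0, hFx⟩
    rcases le_or_gt x xhat with hle | hlt
    · exfalso
      have := hanti ⟨le_refl 0, hxhat.le⟩ ⟨hx0.le, hle⟩ hx0
      rw [hF0, hFx] at this
      linarith
    · exact hmonoF.injOn (Set.mem_Ici.2 hlt.le) (Set.mem_Ici.2 hygt.le) (by rw [hFx, hFy])
end

section
/- Root counting, case C₃ᵦ(I)(Iₐ)(i) of Appendix A (four positive equilibria): let F̄(x) = a₄x⁴ + a₃x³ + a₂x² + a₁x + a₀ with a₄ > 0, a₃ < 0, a₂ > 0, 9·a₃² − 24·a₂·a₄ > 0, a₁ < 0 and a₀ > 0. Suppose the derivative F̄′ has three roots x̂₃ < x̂₄ < x̂₅ in (0, ∞) with F̄(x̂₃) < 0, F̄(x̂₄) > 0 and F̄(x̂₅) < 0. Then F̄ has exactly four roots in (0, ∞): one in (0, x̂₃), one in (x̂₃, x̂₄), one in (x̂₄, x̂₅), and one in (x̂₅, ∞). -/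
set_option maxHeartbeats 1000000 in
/-- Root counting, case C₃ᵦ(I)(Iₐ)(i) (four positive equilibria): under the stated sign
conditions, if `xh3 < xh4 < xh5` are three positive roots of `F̄′` with `F̄(xh3) < 0`,
`F̄(xh4) > 0`, `F̄(xh5) < 0`, then `F̄` has exactly four positive roots, one in each of
`(0, xh3)`, `(xh3, xh4)`, `(xh4, xh5)`, `(xh5, ∞)`. -/
theorem quartic_four_positive_roots
    (a₀ a₁ a₂ a₃ a₄ : ℝ) (ha₄ : 0 < a₄) (ha₃ : a₃ < 0) (ha₂ : 0 < a₂)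
    (hdisc : 0 < 9 * a₃ ^ 2 - 24 * a₂ * a₄) (ha₁ : a₁ < 0) (ha₀ : 0 < a₀)
    (Fbar : ℝ → ℝ)
    (hFbar : Fbar = fun x => a₄ * x ^ 4 + a₃ * x ^ 3 + a₂ * x ^ 2 + a₁ * x + a₀)
    (xh3 xh4 xh5 : ℝ) (hxh3pos : 0 < xh3) (h34 : xh3 < xh4) (h45 : xh4 < xh5)
    (hc₃ : deriv Fbar xh3 = 0) (hc₄ : deriv Fbar xh4 = 0) (hc₅ : deriv Fbar xh5 = 0)
    (hv₃ : Fbar xh3 < 0) (hv₄ : 0 < Fbar xh4) (hv₅ : Fbar xh5 < 0) :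
    (∃! x, x ∈ Set.Ioo 0 xh3 ∧ Fbar x = 0) ∧
      (∃! x, x ∈ Set.Ioo xh3 xh4 ∧ Fbar x = 0) ∧
      (∃! x, x ∈ Set.Ioo xh4 xh5 ∧ Fbar x = 0) ∧
      (∃! x, x ∈ Set.Ioi xh5 ∧ Fbar x = 0) := by
  have hcont : Continuous Fbar := by rw [hFbar]; fun_prop
  -- the derivative of Fbar
  have key : ∀ x : ℝ, HasDerivAt Fbar (4 * a₄ * x ^ 3 + 3 * a₃ * x ^ 2 + 2 * a₂ * x + a₁) x := by
    intro x
    rw [hFbar]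
    have h4 := (hasDerivAt_pow 4 x).const_mul a₄
    have h3 := (hasDerivAt_pow 3 x).const_mul a₃
    have h2 := (hasDerivAt_pow 2 x).const_mul a₂
    have h1 := (hasDerivAt_id x).const_mul a₁
    have h0 : HasDerivAt (fun _ : ℝ => a₀) 0 x := hasDerivAt_const x a₀
    have := (((h4.add h3).add h2).add h1).add h0
    refine this.congr_deriv ?_
    push_cast
    ring
  -- the derivative values as explicit cubic equations
  have e3 : 4 * a₄ * xh3 ^ 3 + 3 * a₃ * xh3 ^ 2 + 2 * a₂ * xh3 + a₁ = 0 := by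
    rw [← (key xh3).deriv]; exact hc₃
  have e4 : 4 * a₄ * xh4 ^ 3 + 3 * a₃ * xh4 ^ 2 + 2 * a₂ * xh4 + a₁ = 0 := by
    rw [← (key xh4).deriv]; exact hc₄
  have e5 : 4 * a₄ * xh5 ^ 3 + 3 * a₃ * xh5 ^ 2 + 2 * a₂ * xh5 + a₁ = 0 := by
    rw [← (key xh5).deriv]; exact hc₅
  have hne34 : xh3 - xh4 ≠ 0 := sub_ne_zero.mpr (ne_of_lt h34)
  have hne45 : xh4 - xh5 ≠ 0 := sub_ne_zero.mpr (ne_of_lt h45)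
  have hne35 : xh3 - xh5 ≠ 0 := sub_ne_zero.mpr (ne_of_lt (h34.trans h45))
  have hA : 4 * a₄ * (xh3 ^ 2 + xh3 * xh4 + xh4 ^ 2) + 3 * a₃ * (xh3 + xh4) + 2 * a₂ = 0 := by
    have h : (xh3 - xh4) *
        (4 * a₄ * (xh3 ^ 2 + xh3 * xh4 + xh4 ^ 2) + 3 * a₃ * (xh3 + xh4) + 2 * a₂) = 0 := by
      linear_combination e3 - e4
    rcases mul_eq_zero.mp h with h | h
    · exact absurd h hne34
    · exact h
  have hB : 4 * a₄ * (xh4 ^ 2 + xh4 * xh5 + xh5 ^ 2) + 3 * a₃ * (xh4 + xh5) + 2 * a₂ = 0 := by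
    have h : (xh4 - xh5) *
        (4 * a₄ * (xh4 ^ 2 + xh4 * xh5 + xh5 ^ 2) + 3 * a₃ * (xh4 + xh5) + 2 * a₂) = 0 := by
      linear_combination e4 - e5
    rcases mul_eq_zero.mp h with h | h
    · exact absurd h hne45
    · exact h
  have hC : 4 * a₄ * (xh3 + xh4 + xh5) + 3 * a₃ = 0 := by
    have h : (xh3 - xh5) * (4 * a₄ * (xh3 + xh4 + xh5) + 3 * a₃) = 0 := by
      linear_combination hA - hB
    rcases mul_eq_zero.mp h with h | h
    · exact absurd h hne35
    · exact h
  have hs2 : 2 * a₂ = 4 * a₄ * (xh3 * xh4 + xh3 * xh5 + xh4 * xh5) := by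
    linear_combination hA - (xh3 + xh4) * hC
  have hs3 : a₁ = -(4 * a₄ * (xh3 * xh4 * xh5)) := by
    linear_combination e3 - xh3 ^ 2 * hC - xh3 * hs2
  have hd : ∀ x : ℝ, deriv Fbar x = 4 * a₄ * (x - xh3) * (x - xh4) * (x - xh5) := by
    intro x
    rw [(key x).deriv]
    linear_combination x ^ 2 * hC + x * hs2 + hs3
  -- monotonicity on the four intervals
  have anti1 : StrictAntiOn Fbar (Set.Icc 0 xh3) := by
    apply strictAntiOn_of_deriv_neg (convex_Icc _ _) hcont.continuousOn
    intro x hx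
    rw [interior_Icc] at hx
    rw [hd]
    have p1 : 0 < (x - xh3) * (x - xh4) :=
      mul_pos_of_neg_of_neg (by linarith [hx.2]) (by linarith [hx.2])
    have p2 : (x - xh3) * (x - xh4) * (x - xh5) < 0 :=
      mul_neg_of_pos_of_neg p1 (by linarith [hx.2])
    calc 4 * a₄ * (x - xh3) * (x - xh4) * (x - xh5)
        = 4 * a₄ * ((x - xh3) * (x - xh4) * (x - xh5)) := by ring
      _ < 0 := mul_neg_of_pos_of_neg (by linarith) p2
  have mono2 : StrictMonoOn Fbar (Set.Icc xh3 xh4) := by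
    apply strictMonoOn_of_deriv_pos (convex_Icc _ _) hcont.continuousOn
    intro x hx
    rw [interior_Icc] at hx
    rw [hd]
    have p1 : 0 < (x - xh4) * (x - xh5) :=
      mul_pos_of_neg_of_neg (by linarith [hx.2]) (by linarith [hx.2])
    have p2 : 0 < (x - xh3) * ((x - xh4) * (x - xh5)) :=
      mul_pos (by linarith [hx.1]) p1
    calc (0:ℝ) < 4 * a₄ * ((x - xh3) * ((x - xh4) * (x - xh5))) :=
        mul_pos (by linarith) p2
      _ = 4 * a₄ * (x - xh3) * (x - xh4) * (x - xh5) := by ring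
  have anti3 : StrictAntiOn Fbar (Set.Icc xh4 xh5) := by
    apply strictAntiOn_of_deriv_neg (convex_Icc _ _) hcont.continuousOn
    intro x hx
    rw [interior_Icc] at hx
    rw [hd]
    have p1 : 0 < (x - xh3) * (x - xh4) :=
      mul_pos (by linarith [hx.1]) (by linarith [hx.1])
    have p2 : (x - xh3) * (x - xh4) * (x - xh5) < 0 :=
      mul_neg_of_pos_of_neg p1 (by linarith [hx.2])
    calc 4 * a₄ * (x - xh3) * (x - xh4) * (x - xh5)
        = 4 * a₄ * ((x - xh3) * (x - xh4) * (x - xh5)) := by ring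
      _ < 0 := mul_neg_of_pos_of_neg (by linarith) p2
  have mono4 : StrictMonoOn Fbar (Set.Ici xh5) := by
    apply strictMonoOn_of_deriv_pos (convex_Ici _) hcont.continuousOn
    intro x hx
    rw [interior_Ici] at hx
    have hx5 : xh5 < x := hx
    rw [hd]
    have p1 : 0 < (x - xh4) * (x - xh5) :=
      mul_pos (by linarith) (by linarith)
    have p2 : 0 < (x - xh3) * ((x - xh4) * (x - xh5)) :=
      mul_pos (by linarith) p1
    calc (0:ℝ) < 4 * a₄ * ((x - xh3) * ((x - xh4) * (x - xh5))) :=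
        mul_pos (by linarith) p2
      _ = 4 * a₄ * (x - xh3) * (x - xh4) * (x - xh5) := by ring
  have hF0 : 0 < Fbar 0 := by rw [hFbar]; simpa using ha₀
  -- a point far to the right where Fbar is positive
  set b : ℝ := max (max (xh5 + 1) 1) ((1 - a₃ - a₁) / a₄) with hbdef
  have hb1 : (1:ℝ) ≤ b := le_max_of_le_left (le_max_right _ _)
  have hb5 : xh5 < b := lt_of_lt_of_le (lt_add_one xh5) (le_max_of_le_left (le_max_left _ _))
  have hba : 1 - a₃ - a₁ ≤ a₄ * b := by
    have h := le_max_right (max (xh5 + 1) 1) ((1 - a₃ - a₁) / a₄)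
    rw [div_le_iff₀ ha₄] at h
    linarith [h]
  have hFb : 0 < Fbar b := by
    have hFbb : Fbar b = a₄ * b ^ 4 + a₃ * b ^ 3 + a₂ * b ^ 2 + a₁ * b + a₀ := by rw [hFbar]
    rw [hFbb]
    have hb0 : (0:ℝ) ≤ b := by linarith
    have k1 : 0 ≤ b ^ 3 * (a₄ * b + a₃ + a₁ - 1) :=
      mul_nonneg (pow_nonneg hb0 3) (by linarith)
    have k2 : (0:ℝ) ≤ b ^ 3 - b := by nlinarith [mul_nonneg (mul_nonneg hb0 (by linarith : (0:ℝ) ≤ b - 1)) (by linarith : (0:ℝ) ≤ b + 1)]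
    have k3 : 0 ≤ (b ^ 3 - b) * (-a₁) := mul_nonneg k2 (by linarith)
    have k4 : (1:ℝ) ≤ b ^ 3 := one_le_pow₀ hb1
    have k5 : 0 ≤ a₂ * b ^ 2 := mul_nonneg ha₂.le (sq_nonneg b)
    nlinarith [k1, k3, k4, k5]
  -- existence statements via IVT
  obtain ⟨x₁, hx₁, hx₁0⟩ := intermediate_value_Ioo' (le_of_lt hxh3pos)
    (hcont.continuousOn (s := Set.Icc 0 xh3)) (Set.mem_Ioo.mpr ⟨hv₃, hF0⟩)
  obtain ⟨x₂, hx₂, hx₂0⟩ := intermediate_value_Ioo (le_of_lt h34)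
    (hcont.continuousOn (s := Set.Icc xh3 xh4)) (Set.mem_Ioo.mpr ⟨hv₃, hv₄⟩)
  obtain ⟨x₃, hx₃, hx₃0⟩ := intermediate_value_Ioo' (le_of_lt h45)
    (hcont.continuousOn (s := Set.Icc xh4 xh5)) (Set.mem_Ioo.mpr ⟨hv₅, hv₄⟩)
  obtain ⟨x₄, hx₄, hx₄0⟩ := intermediate_value_Ioo (le_of_lt hb5)
    (hcont.continuousOn (s := Set.Icc xh5 b)) (Set.mem_Ioo.mpr ⟨hv₅, hFb⟩)
  refine ⟨⟨x₁, ⟨hx₁, hx₁0⟩, ?_⟩, ⟨x₂, ⟨hx₂, hx₂0⟩, ?_⟩, ⟨x₃, ⟨hx₃, hx₃0⟩, ?_⟩,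
    ⟨x₄, ⟨hx₄.1, hx₄0⟩, ?_⟩⟩
  · rintro y ⟨hy, hy0⟩
    exact anti1.injOn (Set.mem_Icc.mpr ⟨hy.1.le, hy.2.le⟩)
      (Set.mem_Icc.mpr ⟨hx₁.1.le, hx₁.2.le⟩) (by rw [hy0, hx₁0])
  · rintro y ⟨hy, hy0⟩
    exact mono2.injOn (Set.mem_Icc.mpr ⟨hy.1.le, hy.2.le⟩)
      (Set.mem_Icc.mpr ⟨hx₂.1.le, hx₂.2.le⟩) (by rw [hy0, hx₂0])
  · rintro y ⟨hy, hy0⟩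
    exact anti3.injOn (Set.mem_Icc.mpr ⟨hy.1.le, hy.2.le⟩)
      (Set.mem_Icc.mpr ⟨hx₃.1.le, hx₃.2.le⟩) (by rw [hy0, hx₃0])
  · rintro y ⟨hy, hy0⟩
    exact mono4.injOn (Set.mem_Ici.mpr (le_of_lt hy))
      (Set.mem_Ici.mpr hx₄.1.le) (by rw [hy0, hx₄0])
end

section
/- Parameter formulas at a nilpotent (Bogdanov–Takens) equilibrium (used in Theorems 2.5(II) and 3.1): fix x* > 0 and suppose F(x*) = 0, F′(x*) = 0 and p(x*) = 0, where F(x) = x·(r·(1 − x/k) − m/(x+b)) − q·n·x²/(x² + c·x + a) and p(x) = n·q·x·(x² − a)/(a + c·x + x²)² − b·m/(b + x)² − 2·r·x/k + r − s. Then n = s·(a + x*·(c + x*))/(q·x*), and if moreover b − k + 2x* ≠ 0, then r = −k·s·(a·(b + 2x*) + x*²·(c − b)) / (x*·(a + x*·(c + x*))·(b − k + 2x*)) and m = −s·(b + x*)²·(a·k + x*²·(c − k + 2x*)) / (x*·(a + x*·(c + x*))·(b − k + 2x*)). -/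
/-- Parameter formulas at a nilpotent (Bogdanov–Takens) equilibrium: if
`F(x*) = F′(x*) = p(x*) = 0`, then `n = s·(a + x*·(c + x*))/(q·x*)`, and if moreover
`b - k + 2x* ≠ 0`, then `r` and `m` are given by the stated formulas. -/
theorem parameters_at_nilpotent_equilibrium
    (r s k q a n m b c : ℝ)
    (hr : 0 < r) (hs : 0 < s) (hk : 0 < k) (hq : 0 < q) (ha : 0 < a)
    (hn : 0 < n) (hm : 0 < m) (hb : 0 < b) (hc : -2 * Real.sqrt a < c)
    (F p : ℝ → ℝ)
    (hF : F = fun x => x * (r * (1 - x / k) - m / (x + b)) -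
        q * n * x ^ 2 / (x ^ 2 + c * x + a))
    (hp : p = fun x => n * q * x * (x ^ 2 - a) / (a + c * x + x ^ 2) ^ 2 -
        b * m / (b + x) ^ 2 - 2 * r * x / k + r - s)
    (xs : ℝ) (hxs : 0 < xs)
    (hFeq : F xs = 0) (hF' : deriv F xs = 0) (hpeq : p xs = 0) :
    n = s * (a + xs * (c + xs)) / (q * xs) ∧
      (b - k + 2 * xs ≠ 0 →
        r = -(k * s * (a * (b + 2 * xs) + xs ^ 2 * (c - b))) /
            (xs * (a + xs * (c + xs)) * (b - k + 2 * xs)) ∧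
          m = -(s * (b + xs) ^ 2 * (a * k + xs ^ 2 * (c - k + 2 * xs))) /
            (xs * (a + xs * (c + xs)) * (b - k + 2 * xs))) := by
  have hsq : Real.sqrt a ^ 2 = a := Real.sq_sqrt ha.le
  have hDpos : 0 < xs ^ 2 + c * xs + a := by
    nlinarith [sq_nonneg (xs - Real.sqrt a), Real.sqrt_nonneg a, hxs, hc]
  have hD : xs ^ 2 + c * xs + a ≠ 0 := ne_of_gt hDpos
  have hB : xs + b ≠ 0 := by positivity
  have hk0 : k ≠ 0 := ne_of_gt hk
  have hx0 : xs ≠ 0 := ne_of_gt hxs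
  -- derivative
  have hder : HasDerivAt F
      (1 * (r * (1 - xs / k) - m / (xs + b)) +
        xs * (r * (-(1 / k)) - (0 * (xs + b) - m * 1) / (xs + b) ^ 2) -
        (q * n * (2 * xs) * (xs ^ 2 + c * xs + a) -
          q * n * xs ^ 2 * (2 * xs + c)) / (xs ^ 2 + c * xs + a) ^ 2) xs := by
    rw [hF]
    have h1 : HasDerivAt (fun x : ℝ => r * (1 - x / k)) (r * (-(1 / k))) xs :=
      (((hasDerivAt_id xs).div_const k).const_sub 1).const_mul r
    have h2 : HasDerivAt (fun x : ℝ => m / (x + b))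
        ((0 * (xs + b) - m * 1) / (xs + b) ^ 2) xs :=
      (hasDerivAt_const xs m).div ((hasDerivAt_id xs).add_const b) hB
    have h3 : HasDerivAt (fun x : ℝ => x * (r * (1 - x / k) - m / (x + b)))
        (1 * (r * (1 - xs / k) - m / (xs + b)) +
          xs * (r * (-(1 / k)) - (0 * (xs + b) - m * 1) / (xs + b) ^ 2)) xs :=
      (hasDerivAt_id xs).mul (h1.sub h2)
    have h4 : HasDerivAt (fun x : ℝ => q * n * x ^ 2) (q * n * (2 * xs)) xs := by
      simpa using ((hasDerivAt_pow 2 xs).const_mul (q * n))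
    have h5 : HasDerivAt (fun x : ℝ => x ^ 2 + c * x + a) (2 * xs + c) xs := by
      have := ((hasDerivAt_pow 2 xs).add (((hasDerivAt_id xs).const_mul c))).add_const a
      simpa using this
    exact h3.sub (h4.div h5 hD)
  have eq2 := hder.deriv.symm.trans hF'
  have eq1 : xs * (r * (1 - xs / k) - m / (xs + b)) -
      q * n * xs ^ 2 / (xs ^ 2 + c * xs + a) = 0 := by
    rw [hF] at hFeq; exact hFeq
  have eq3 : n * q * xs * (xs ^ 2 - a) / (a + c * xs + xs ^ 2) ^ 2 -
      b * m / (b + xs) ^ 2 - 2 * r * xs / k + r - s = 0 := by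
    rw [hp] at hpeq; exact hpeq
  -- key: n q xs = s D
  have hBb : (b + xs) ≠ 0 := by positivity
  have key : n * q * xs = s * (xs ^ 2 + c * xs + a) := by
    have hcomb : n * q * xs / (xs ^ 2 + c * xs + a) - s =
        (n * q * xs * (xs ^ 2 - a) / (a + c * xs + xs ^ 2) ^ 2 -
          b * m / (b + xs) ^ 2 - 2 * r * xs / k + r - s) -
        (1 * (r * (1 - xs / k) - m / (xs + b)) +
          xs * (r * (-(1 / k)) - (0 * (xs + b) - m * 1) / (xs + b) ^ 2) -
          (q * n * (2 * xs) * (xs ^ 2 + c * xs + a) -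
            q * n * xs ^ 2 * (2 * xs + c)) / (xs ^ 2 + c * xs + a) ^ 2) := by
      have hD2 : (a + c * xs + xs ^ 2) ≠ 0 := by
        rw [show a + c * xs + xs ^ 2 = xs ^ 2 + c * xs + a by ring]; exact hD
      generalize hDD : xs ^ 2 + c * xs + a = D at hD ⊢
      rw [show a + c * xs + xs ^ 2 = D by rw [← hDD]; ring]
      field_simp
      subst hDD
      ring
    rw [eq3, eq2] at hcomb
    have : n * q * xs / (xs ^ 2 + c * xs + a) = s := by linarith
    rw [div_eq_iff hD] at this
    linarith
  have hD2 : (xs ^ 2 + c * xs + a) ^ 2 ≠ 0 := pow_ne_zero 2 hD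
  -- clean version of eq1
  have h4 : q * n * xs ^ 2 / (xs ^ 2 + c * xs + a) = s * xs := by
    rw [div_eq_iff hD]; linear_combination xs * key
  rw [h4] at eq1
  have h5 : (q * n * (2 * xs) * (xs ^ 2 + c * xs + a) -
      q * n * xs ^ 2 * (2 * xs + c)) / (xs ^ 2 + c * xs + a) ^ 2 =
      s * (c * xs + 2 * a) / (xs ^ 2 + c * xs + a) := by
    rw [div_eq_div_iff hD2 hD]
    linear_combination ((xs ^ 2 + c * xs + a) * (c * xs + 2 * a)) * key
  rw [h5] at eq2
  have hD' : xs * (xs + c) + a ≠ 0 := by rw [show xs * (xs + c) + a = xs ^ 2 + c * xs + a by ring]; exact hD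
  field_simp at eq1 eq2
  have e1 : r * (k - xs) * (xs + b) - m * k - s * k * (xs + b) = 0 := by
    have h6 : xs * (r * (k - xs) * (xs + b) - m * k - s * k * (xs + b)) = xs * 0 := by
      linear_combination eq1
    exact mul_left_cancel₀ hx0 h6
  have e2 : r * (k - 2 * xs) * (xs + b) ^ 2 * (xs ^ 2 + c * xs + a) -
      m * b * k * (xs ^ 2 + c * xs + a) -
      s * (c * xs + 2 * a) * k * (xs + b) ^ 2 = 0 := by
    have h6 : (k * (xs + b)) * (r * (k - 2 * xs) * (xs + b) ^ 2 * (xs ^ 2 + c * xs + a) -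
        m * b * k * (xs ^ 2 + c * xs + a) -
        s * (c * xs + 2 * a) * k * (xs + b) ^ 2) = (k * (xs + b)) * 0 := by
      linear_combination (k * (xs + b)) * eq2
    exact mul_left_cancel₀ (mul_ne_zero hk0 hB) h6
  constructor
  · rw [eq_div_iff (by positivity)]
    linear_combination key
  · intro hW
    have hxDW : xs * (a + xs * (c + xs)) * (b - k + 2 * xs) ≠ 0 := by
      refine mul_ne_zero (mul_ne_zero hx0 ?_) hW
      rw [show a + xs * (c + xs) = xs ^ 2 + c * xs + a by ring]; exact hD
    have hrv : r * (xs * (a + xs * (c + xs)) * (b - k + 2 * xs)) =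
        -(k * s * (a * (b + 2 * xs) + xs ^ 2 * (c - b))) := by
      refine mul_right_cancel₀ hB ?_
      linear_combination (-1 : ℝ) * e2 + b * (xs ^ 2 + c * xs + a) * e1
    refine ⟨by rw [eq_div_iff hxDW]; exact hrv, ?_⟩
    rw [eq_div_iff hxDW]
    refine mul_right_cancel₀ hk0 ?_
    linear_combination (-(xs * (xs ^ 2 + c * xs + a) * (b - k + 2 * xs))) * e1 +
      (k - xs) * (xs + b) * hrv
end
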